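/- For every n ≥ 2, the original monic orthogonal polynomials and the double Geronimus polynomials satisfy the connection formula (x−a)² P_n(x) = P_{n+2}^{gg}(x) + σ_{n+1,n+1} P_{n+1}^{gg}(x) + σ_{n+1,n} P_n^{gg}(x), where σ_{n+1,n+1} = B_{n+1} ‖P_n‖₀² / (C_{n+1} ‖P_{n−1}‖₀²) and σ_{n+1,n} = ‖P_n‖₀² / (C_n ‖P_{n−2}‖₀²). -/

import Mathlib

open MeasureTheory Polynomial Matrix

lemma aux_span (Q : ℕ → ℝ[X]) (hm : ∀ k, (Q k).Monic) (hd : ∀ k, (Q k).natDegree = k) :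
    ∀ m (p : ℝ[X]), p.natDegree ≤ m →
      ∃ c : ℕ → ℝ, p = ∑ k ∈ Finset.range (m + 1), Polynomial.C (c k) * Q k := by
  intro m
  induction m with
  | zero =>
    intro p hp
    refine ⟨fun _ => p.coeff 0, ?_⟩
    have hQ0 : Q 0 = 1 := ((hm 0).natDegree_eq_zero).1 (hd 0)
    conv_lhs => rw [Polynomial.eq_C_of_natDegree_le_zero hp]
    simp [hQ0]
  | succ m ih =>
    intro p hp
    set r := p - Polynomial.C (p.coeff (m + 1)) * Q (m + 1) with hr
    have hq1 : (Q (m+1)).coeff (m+1) = 1 := by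
      have := (hm (m+1)).coeff_natDegree; rwa [hd (m+1)] at this
    have hrd : r.natDegree ≤ m := by
      rw [Polynomial.natDegree_le_iff_coeff_eq_zero]
      intro j hj
      rcases eq_or_lt_of_le (Nat.succ_le_of_lt hj) with h | h
      · simp only [hr, Polynomial.coeff_sub, Polynomial.coeff_C_mul, ← h]
        rw [show m.succ = m + 1 from rfl, hq1]; ring
      · have h1 : p.coeff j = 0 := Polynomial.coeff_eq_zero_of_natDegree_lt (lt_of_le_of_lt hp h)
        have h2 : (Q (m+1)).coeff j = 0 := by
          apply Polynomial.coeff_eq_zero_of_natDegree_lt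
          rw [hd (m+1)]; exact h
        simp [hr, h1, h2]
    obtain ⟨c, hc⟩ := ih r hrd
    refine ⟨fun k => if k = m + 1 then p.coeff (m+1) else c k, ?_⟩
    have hsum : ∑ k ∈ Finset.range (m + 1 + 1),
        Polynomial.C ((fun k => if k = m + 1 then p.coeff (m+1) else c k) k) * Q k
        = (∑ k ∈ Finset.range (m+1), Polynomial.C (c k) * Q k)
          + Polynomial.C (p.coeff (m+1)) * Q (m+1) := by
      rw [Finset.sum_range_succ]
      congr 1
      · apply Finset.sum_congr rfl; intro k hk
        have hne : k ≠ m+1 := by have := Finset.mem_range.1 hk; omega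
        simp [hne]
      · simp
    rw [hsum, ← hc, hr]; ring

lemma aux_vanish (f : ℝ[X] → ℝ) (hadd : ∀ p q, f (p + q) = f p + f q)
    (hsmul : ∀ (c : ℝ) p, f (Polynomial.C c * p) = c * f p) (Q : ℕ → ℝ[X]) :
    ∀ (m : ℕ) (c : ℕ → ℝ), (∀ k ≤ m, f (Q k) = 0) →
      f (∑ k ∈ Finset.range (m + 1), Polynomial.C (c k) * Q k) = 0 := by
  intro m
  induction m with
  | zero => intro c h0; simp [hsmul, h0 0 le_rfl]
  | succ m ih =>
    intro c h0
    rw [Finset.sum_range_succ, hadd, hsmul, h0 (m+1) le_rfl,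
      ih c (fun k hk => h0 k (hk.trans (Nat.le_succ m)))]
    ring

lemma aux_orth (f : ℝ[X] → ℝ) (hadd : ∀ p q, f (p + q) = f p + f q)
    (hsmul : ∀ (c : ℝ) p, f (Polynomial.C c * p) = c * f p) (Q : ℕ → ℝ[X])
    (hm : ∀ k, (Q k).Monic) (hd : ∀ k, (Q k).natDegree = k) (m : ℕ)
    (h0 : ∀ k ≤ m, f (Q k) = 0) (p : ℝ[X]) (hp : p.natDegree ≤ m) : f p = 0 := by
  obtain ⟨c, hc⟩ := aux_span Q hm hd m p hp
  rw [hc]; exact aux_vanish f hadd hsmul Q m c h0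

lemma aux_monic_sub (p q : ℝ[X]) (m : ℕ) (hm : 1 ≤ m) (hp : p.Monic) (hq : q.Monic)
    (hpd : p.natDegree = m) (hqd : q.natDegree = m) : (p - q).natDegree ≤ m - 1 := by
  rw [Polynomial.natDegree_le_iff_coeff_eq_zero]
  intro j hj
  have hj' : m ≤ j := by omega
  rcases eq_or_lt_of_le hj' with h | h
  · have hp1 : p.coeff j = 1 := by have := hp.coeff_natDegree; rwa [hpd, h] at this
    have hq1 : q.coeff j = 1 := by have := hq.coeff_natDegree; rwa [hqd, h] at this
    simp [hp1, hq1]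
  · have h1 : p.coeff j = 0 := Polynomial.coeff_eq_zero_of_natDegree_lt (by omega)
    have h2 : q.coeff j = 0 := Polynomial.coeff_eq_zero_of_natDegree_lt (by omega)
    simp [h1, h2]

lemma aux_dot (M : Matrix (Fin 2) (Fin 2) ℝ) (hM : M.IsSymm) (v w : Fin 2 → ℝ) :
    v ⬝ᵥ M.mulVec w = w ⬝ᵥ M.mulVec v := by
  have h : M 0 1 = M 1 0 := hM.apply 1 0
  simp [Matrix.mulVec, dotProduct, Fin.sum_univ_two]
  linear_combination (v 0 * w 1 - v 1 * w 0) * h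

theorem geronimus_standard_connection
    (μ μgg : MeasureTheory.Measure ℝ) (E : Set ℝ) (a : ℝ)
    (hEc : IsCompact E) (hEinf : E.Infinite) (haE : a ∉ E) (hEsupp : μ Eᶜ = 0)
    (hμint : ∀ p : ℝ[X], MeasureTheory.Integrable (fun x => p.eval x) μ)
    (hμpos : ∀ p : ℝ[X], p ≠ 0 → 0 < ∫ x, (p.eval x) ^ 2 ∂μ)
    (P : ℕ → ℝ[X])
    (hPmonic : ∀ n, (P n).Monic)
    (hPdeg : ∀ n, (P n).natDegree = n)
    (hPorth : ∀ m n, m ≠ n → ∫ x, (P m).eval x * (P n).eval x ∂μ = 0)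
    (nrm : ℕ → ℝ) (hnrm : ∀ k, nrm k = ∫ x, ((P k).eval x) ^ 2 ∂μ)
    (hμggint : ∀ p : ℝ[X], MeasureTheory.Integrable (fun x => p.eval x) μgg)
    (hμgg : ∀ p : ℝ[X], ∫ x, p.eval x * (x - a) ^ 2 ∂μgg = ∫ x, p.eval x ∂μ)
    (M₁ : Matrix (Fin 2) (Fin 2) ℝ) (hM₁ : M₁.IsSymm)
    (inn : ℝ[X] → ℝ[X] → ℝ)
    (hinn : ∀ p q : ℝ[X], inn p q = (∫ x, p.eval x * q.eval x ∂μgg)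
      + ![p.eval a, (derivative p).eval a] ⬝ᵥ
          M₁.mulVec ![q.eval a, (derivative q).eval a])
    (hinnpos : ∀ p : ℝ[X], p ≠ 0 → 0 < inn p p)
    (Pgg : ℕ → ℝ[X])
    (hGmonic : ∀ n, (Pgg n).Monic)
    (hGdeg : ∀ n, (Pgg n).natDegree = n)
    (hGorth : ∀ m n, m ≠ n → inn (Pgg m) (Pgg n) = 0)
    (B C' : ℕ → ℝ)
    (hconn1 : Pgg 1 = P 1 + Polynomial.C (B 1) * P 0)
    (hconn : ∀ n, 2 ≤ n →
      Pgg n = P n + Polynomial.C (B n) * P (n - 1) + Polynomial.C (C' n) * P (n - 2))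
    (hC' : ∀ n, 2 ≤ n → C' n ≠ 0)
    : ∀ n, 2 ≤ n →
      (X - Polynomial.C a) ^ 2 * P n
        = Pgg (n + 2)
          + Polynomial.C (B (n + 1) * nrm n / (C' (n + 1) * nrm (n - 1))) * Pgg (n + 1)
          + Polynomial.C (nrm n / (C' n * nrm (n - 2))) * Pgg n := by
  -- basic positivity
  have hnrmpos : ∀ k, 0 < nrm k := fun k => by
    rw [hnrm]; exact hμpos (P k) (hPmonic k).ne_zero
  -- integrability
  have hintμ : ∀ p q : ℝ[X], MeasureTheory.Integrable (fun x => p.eval x * q.eval x) μ := by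
    intro p q; simpa [Polynomial.eval_mul] using hμint (p * q)
  have hintμgg : ∀ p q : ℝ[X], MeasureTheory.Integrable (fun x => p.eval x * q.eval x) μgg := by
    intro p q; simpa [Polynomial.eval_mul] using hμggint (p * q)
  -- μ-integral right-linearity
  have iadd : ∀ p q r : ℝ[X], ∫ x, p.eval x * (q + r).eval x ∂μ
      = (∫ x, p.eval x * q.eval x ∂μ) + ∫ x, p.eval x * r.eval x ∂μ := by
    intro p q r
    rw [← MeasureTheory.integral_add (hintμ p q) (hintμ p r)]
    congr 1; funext x; simp [Polynomial.eval_add]; ring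
  have ismul : ∀ (c : ℝ) (p q : ℝ[X]), ∫ x, p.eval x * (Polynomial.C c * q).eval x ∂μ
      = c * ∫ x, p.eval x * q.eval x ∂μ := by
    intro c p q
    rw [← MeasureTheory.integral_const_mul]
    congr 1; funext x; simp [Polynomial.eval_mul]; ring
  -- orthogonality of P n to lower-degree polynomials
  have mu_orth : ∀ (nn m : ℕ), m < nn → ∀ q : ℝ[X], q.natDegree ≤ m →
      ∫ x, (P nn).eval x * q.eval x ∂μ = 0 := by
    intro nn m hmn q hq
    exact aux_orth (fun q => ∫ x, (P nn).eval x * q.eval x ∂μ) (iadd (P nn))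
      (fun c p => ismul c (P nn) p) P hPmonic hPdeg m
      (fun k hk => hPorth nn k (by omega)) q hq
  have mu_self : ∀ k, ∫ x, (P k).eval x * (P k).eval x ∂μ = nrm k := by
    intro k; rw [hnrm]; congr 1; funext x; ring
  have mu_conn : ∀ j m, 2 ≤ m → ∫ x, (P j).eval x * (Pgg m).eval x ∂μ
      = (∫ x, (P j).eval x * (P m).eval x ∂μ)
        + B m * (∫ x, (P j).eval x * (P (m - 1)).eval x ∂μ)
        + C' m * (∫ x, (P j).eval x * (P (m - 2)).eval x ∂μ) := by
    intro j m hm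
    rw [hconn m hm, iadd, iadd, ismul, ismul]
  -- inn right-linearity
  have gadd : ∀ p q r : ℝ[X], inn p (q + r) = inn p q + inn p r := by
    intro p q r
    rw [hinn, hinn, hinn]
    have h1 : ∫ x, p.eval x * (q + r).eval x ∂μgg
        = (∫ x, p.eval x * q.eval x ∂μgg) + ∫ x, p.eval x * r.eval x ∂μgg := by
      rw [← MeasureTheory.integral_add (hintμgg p q) (hintμgg p r)]
      congr 1; funext x; simp [Polynomial.eval_add]; ring
    have hv : (![(q + r).eval a, (derivative (q + r)).eval a] : Fin 2 → ℝ)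
        = ![q.eval a, (derivative q).eval a] + ![r.eval a, (derivative r).eval a] := by
      funext i; fin_cases i <;> simp
    rw [h1, hv, Matrix.mulVec_add, dotProduct_add]; ring
  have gsmul : ∀ (c : ℝ) (p q : ℝ[X]), inn p (Polynomial.C c * q) = c * inn p q := by
    intro c p q
    rw [hinn, hinn]
    have h1 : ∫ x, p.eval x * (Polynomial.C c * q).eval x ∂μgg
        = c * ∫ x, p.eval x * q.eval x ∂μgg := by
      rw [← MeasureTheory.integral_const_mul]
      congr 1; funext x; simp [Polynomial.eval_mul]; ring
    have hv : (![(Polynomial.C c * q).eval a, (derivative (Polynomial.C c * q)).eval a] : Fin 2 → ℝ)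
        = c • ![q.eval a, (derivative q).eval a] := by
      funext i; fin_cases i <;> simp [Polynomial.derivative_mul]
    rw [h1, hv, Matrix.mulVec_smul, dotProduct_smul, smul_eq_mul]; ring
  have gsub : ∀ p q r : ℝ[X], inn p (q - r) = inn p q - inn p r := by
    intro p q r
    have h : q - r = q + Polynomial.C (-1) * r := by
      rw [Polynomial.C_neg, Polynomial.C_1]; ring
    rw [h, gadd, gsmul]; ring
  have gsymm : ∀ p q : ℝ[X], inn p q = inn q p := by
    intro p q
    rw [hinn, hinn]
    have hi : ∫ x, p.eval x * q.eval x ∂μgg = ∫ x, q.eval x * p.eval x ∂μgg := by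
      congr 1; funext x; ring
    rw [hi, aux_dot M₁ hM₁]
  -- the Geronimus identity in the right slot
  have gger : ∀ p q : ℝ[X], inn q ((X - Polynomial.C a) ^ 2 * p)
      = ∫ x, (q * p).eval x ∂μ := by
    intro p q
    rw [hinn]
    have hv : (![((X - Polynomial.C a) ^ 2 * p).eval a,
        (derivative ((X - Polynomial.C a) ^ 2 * p)).eval a] : Fin 2 → ℝ) = 0 := by
      funext i
      fin_cases i <;>
        simp [Polynomial.derivative_mul, Polynomial.derivative_pow]
    rw [hv, Matrix.mulVec_zero, dotProduct_zero, add_zero]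
    have h1 : ∫ x, q.eval x * ((X - Polynomial.C a) ^ 2 * p).eval x ∂μgg
        = ∫ x, (q * p).eval x * (x - a) ^ 2 ∂μgg := by
      congr 1; funext x
      simp [Polynomial.eval_mul, Polynomial.eval_pow]; ring
    rw [h1, hμgg (q * p)]
  -- orthogonality of Pgg k to lower-degree polynomials
  have g_orth : ∀ (k m : ℕ), m < k → ∀ q : ℝ[X], q.natDegree ≤ m → inn (Pgg k) q = 0 := by
    intro k m hmk q hq
    exact aux_orth (fun q => inn (Pgg k) q) (gadd (Pgg k)) (fun c p => gsmul c (Pgg k) p)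
      Pgg hGmonic hGdeg m (fun j hj => hGorth k j (by omega)) q hq
  -- monicity / degree of (X - a)^2 * P k
  have hsm : ∀ k, ((X - Polynomial.C a) ^ 2 * P k).Monic :=
    fun k => ((monic_X_sub_C a).pow 2).mul (hPmonic k)
  have hsd : ∀ k, ((X - Polynomial.C a) ^ 2 * P k).natDegree = k + 2 := by
    intro k
    rw [((monic_X_sub_C a).pow 2).natDegree_mul (hPmonic k), hPdeg]
    simp [Polynomial.natDegree_pow, Polynomial.natDegree_X_sub_C]
    omega
  -- norm of Pgg m
  have gnorm : ∀ m, 2 ≤ m → inn (Pgg m) (Pgg m) = C' m * nrm (m - 2) := by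
    intro m hm
    have hsd' : ((X - Polynomial.C a) ^ 2 * P (m - 2)).natDegree = m := by
      rw [hsd]; omega
    have hdiff : ((X - Polynomial.C a) ^ 2 * P (m - 2) - Pgg m).natDegree ≤ m - 1 :=
      aux_monic_sub _ _ m (by omega) (hsm (m - 2)) (hGmonic m) hsd' (hGdeg m)
    have h1 : inn (Pgg m) ((X - Polynomial.C a) ^ 2 * P (m - 2))
        = inn (Pgg m) (Pgg m) + inn (Pgg m) ((X - Polynomial.C a) ^ 2 * P (m - 2) - Pgg m) := by
      rw [← gadd]; congr 1; ring
    have h2 : inn (Pgg m) ((X - Polynomial.C a) ^ 2 * P (m - 2) - Pgg m) = 0 :=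
      g_orth m (m - 1) (by omega) _ hdiff
    have h3 : inn (Pgg m) ((X - Polynomial.C a) ^ 2 * P (m - 2))
        = ∫ x, (Pgg m * P (m - 2)).eval x ∂μ := gger (P (m - 2)) (Pgg m)
    have h4 : ∫ x, (Pgg m * P (m - 2)).eval x ∂μ = C' m * nrm (m - 2) := by
      have e : ∫ x, (Pgg m * P (m - 2)).eval x ∂μ
          = ∫ x, (P (m - 2)).eval x * (Pgg m).eval x ∂μ := by
        congr 1; funext x; simp [Polynomial.eval_mul]; ring
      rw [e, mu_conn (m - 2) m hm, hPorth (m - 2) m (by omega),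
        hPorth (m - 2) (m - 1) (by omega), mu_self]
      ring
    linarith [h1, h2, h3, h4]
  -- main argument
  intro n hn
  have hne1 : C' (n + 1) * nrm (n - 1) ≠ 0 :=
    mul_ne_zero (hC' (n + 1) (by omega)) (ne_of_gt (hnrmpos (n - 1)))
  have hne2 : C' n * nrm (n - 2) ≠ 0 :=
    mul_ne_zero (hC' n hn) (ne_of_gt (hnrmpos (n - 2)))
  set σ1 := B (n + 1) * nrm n / (C' (n + 1) * nrm (n - 1)) with hσ1
  set σ2 := nrm n / (C' n * nrm (n - 2)) with hσ2
  set D := (X - Polynomial.C a) ^ 2 * P n - Pgg (n + 2)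
      - Polynomial.C σ1 * Pgg (n + 1) - Polynomial.C σ2 * Pgg n with hD
  have hDkey : D = 0 := by
    by_contra hDne
    have hpos := hinnpos D hDne
    -- degree bound for D
    have hsub : ((X - Polynomial.C a) ^ 2 * P n - Pgg (n + 2)).natDegree ≤ n + 1 := by
      have := aux_monic_sub ((X - Polynomial.C a) ^ 2 * P n) (Pgg (n + 2)) (n + 2)
        (by omega) (hsm n) (hGmonic (n + 2)) (hsd n) (hGdeg (n + 2))
      simpa using this
    have hDdeg : D.natDegree ≤ n + 1 := by
      rw [hD]
      refine le_trans (Polynomial.natDegree_sub_le _ _) (max_le ?_ ?_)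
      · refine le_trans (Polynomial.natDegree_sub_le _ _) (max_le hsub ?_)
        exact le_trans (Polynomial.natDegree_C_mul_le _ _) (by rw [hGdeg])
      · exact le_trans (Polynomial.natDegree_C_mul_le _ _) (by rw [hGdeg]; omega)
    -- key orthogonality: inn (Pgg k) D = 0 for k ≤ n + 1
    have hkey : ∀ k, k ≤ n + 1 → inn (Pgg k) D = 0 := by
      intro k hk
      rw [hD, gsub, gsub, gsub, gsmul, gsmul, gger,
        hGorth k (n + 2) (by omega)]
      rcases Nat.lt_or_ge k n with hklt | hkge
      · -- k < n
        have h1 : ∫ x, (Pgg k * P n).eval x ∂μ = 0 := by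
          have e : ∫ x, (Pgg k * P n).eval x ∂μ
              = ∫ x, (P n).eval x * (Pgg k).eval x ∂μ := by
            congr 1; funext x; simp [Polynomial.eval_mul]; ring
          rw [e]
          exact mu_orth n k hklt (Pgg k) (le_of_eq (hGdeg k))
        rw [h1, hGorth k (n + 1) (by omega), hGorth k n (by omega)]
        ring
      · rcases Nat.lt_or_ge k (n + 1) with hklt1 | hkge1
        · -- k = n
          have hkn : k = n := by omega
          subst hkn
          have h1 : ∫ x, (Pgg k * P k).eval x ∂μ = nrm k := by
            have e : ∫ x, (Pgg k * P k).eval x ∂μ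
                = ∫ x, (P k).eval x * (Pgg k).eval x ∂μ := by
              congr 1; funext x; simp [Polynomial.eval_mul]; ring
            rw [e, mu_conn k k hn, mu_self, hPorth k (k - 1) (by omega),
              hPorth k (k - 2) (by omega)]
            ring
          rw [h1, hGorth k (k + 1) (by omega), gnorm k hn]
          rw [hσ2, div_mul_cancel₀ _ hne2]
          ring
        · -- k = n + 1
          have hkn : k = n + 1 := by omega
          subst hkn
          have h1 : ∫ x, (Pgg (n + 1) * P n).eval x ∂μ = B (n + 1) * nrm n := by
            have e : ∫ x, (Pgg (n + 1) * P n).eval x ∂μ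
                = ∫ x, (P n).eval x * (Pgg (n + 1)).eval x ∂μ := by
              congr 1; funext x; simp [Polynomial.eval_mul]; ring
            rw [e, mu_conn n (n + 1) (by omega)]
            have e2 : n + 1 - 1 = n := by omega
            have e3 : n + 1 - 2 = n - 1 := by omega
            rw [e2, e3, hPorth n (n + 1) (by omega), mu_self,
              hPorth n (n - 1) (by omega)]
            ring
          have h2 : inn (Pgg (n + 1)) (Pgg (n + 1)) = C' (n + 1) * nrm (n - 1) := by
            have := gnorm (n + 1) (by omega)
            rwa [show n + 1 - 2 = n - 1 by omega] at this
          rw [h1, hGorth (n + 1) n (by omega), h2,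
            hσ1, div_mul_cancel₀ _ hne1]
          ring
    -- conclude inn D D = 0
    obtain ⟨c, hc⟩ := aux_span Pgg hGmonic hGdeg (n + 1) D hDdeg
    have hDD : inn D D = 0 := by
      nth_rewrite 2 [hc]
      exact aux_vanish (fun q => inn D q) (gadd D) (fun c p => gsmul c D p) Pgg (n + 1) c
        (fun k hk => by show inn D (Pgg k) = 0; rw [gsymm]; exact hkey k hk)
    linarith
  rw [hD] at hDkey
  linear_combination hDkey
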